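/- Let σ be a fixed-point-free involution on Fin(2n) (a chord diagram with n chords) and ρ the cyclic shift i ↦ i+1. If every chord of σ joins two adjacent points of the circle (i.e., σ(i) ∈ {i−1, i+1} for all i), then σ∘ρ has exactly n+1 cycles, so the Euler genus ε = 1 + n − f of the associated one-vertex orientable ribbon graph is 0. -/

import Mathlib

open Fin.NatCast Fin.CommRing in
lemma aux_cycle (m d : ℕ) (hd : d < 2) (τ : Equiv.Perm (Fin (2 * (m + 2))))
    (h2 : ∀ i : Fin (2 * (m + 2)), i.val % 2 = d → τ i = i + 2)
    (h0 : ∀ i : Fin (2 * (m + 2)), i.val % 2 ≠ d → τ i = i) :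
    τ.cycleType = {m + 2} := by
  have hdvd : (2 : ℕ) ∣ 2 * (m + 2) := ⟨m + 2, rfl⟩
  have h2v : ((2 : Fin (2 * (m + 2))).val) = 2 := by
    have : (2 : Fin (2*(m+2))) = ((2:ℕ) : Fin (2*(m+2))) := by norm_cast
    rw [this, Fin.val_natCast, Nat.mod_eq_of_lt (by omega)]
  have hmoved : ∀ i : Fin (2 * (m + 2)), τ i ≠ i ↔ i.val % 2 = d := by
    intro i
    constructor
    · intro h; by_contra hc; exact h (h0 i hc)
    · intro h
      rw [h2 i h]
      intro hc
      have : ((i + 2 : Fin (2 * (m+2)))).val = i.val := by rw [hc]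
      rw [Fin.add_def, h2v] at this
      simp only [Fin.val_mk] at this
      rcases Nat.lt_or_ge (i.val + 2) (2 * (m+2)) with hlt | hge
      · rw [Nat.mod_eq_of_lt hlt] at this; omega
      · have hb := i.isLt
        rw [Nat.mod_eq_sub_mod hge, Nat.mod_eq_of_lt (by omega)] at this
        omega
  set x₀ : Fin (2 * (m + 2)) := ⟨d, by omega⟩ with hx₀
  have hpow : ∀ k : ℕ, (τ ^ k) x₀ = x₀ + (2 * k : ℕ) := by
    intro k
    induction k with
    | zero => simp
    | succ k ih =>
      rw [pow_succ', Equiv.Perm.mul_apply, ih]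
      have hm : ((x₀ + (2 * k : ℕ) : Fin (2 * (m+2)))).val % 2 = d := by
        rw [Fin.add_def, Fin.val_natCast]
        rw [Nat.mod_mod_of_dvd _ hdvd]
        have hx : (2 * k % (2 * (m+2))) % 2 = 0 := by
          rw [Nat.mod_mod_of_dvd _ hdvd]; omega
        simp only [hx₀]
        omega
      rw [h2 _ hm]
      have : ((2 * (k+1) : ℕ) : Fin (2 * (m+2))) = (2 * k : ℕ) + 2 := by push_cast; ring
      rw [this]
      ring
  have hcyc : τ.IsCycle := by
    refine ⟨x₀, (hmoved x₀).mpr (by simp [hx₀]; omega), ?_⟩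
    intro y hy
    have hyd : y.val % 2 = d := (hmoved y).mp hy
    refine ⟨(y.val / 2 : ℕ), ?_⟩
    rw [zpow_natCast, hpow]
    apply Fin.ext
    rw [Fin.add_def, Fin.val_natCast]
    have hb := y.isLt
    have h1 : 2 * (y.val / 2) < 2 * (m + 2) := by omega
    rw [Nat.mod_eq_of_lt h1]
    simp only [hx₀]
    rw [Nat.mod_eq_of_lt (by omega)]
    omega
  rw [hcyc.cycleType]
  have hsupp : τ.support = Finset.univ.filter (fun i => i.val % 2 = d) := by
    ext i; simp [Equiv.Perm.mem_support, hmoved i]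
  have hcard : τ.support.card = m + 2 := by
    rw [hsupp]
    have : ((Finset.univ : Finset (Fin (2*(m+2)))).filter (fun i => i.val % 2 = d)).card
        = (Finset.univ : Finset (Fin (m+2))).card := by
      refine Finset.card_bij' (fun i _ => (⟨i.val / 2, by omega⟩ : Fin (m+2)))
        (fun j _ => (⟨2 * j.val + d, by omega⟩ : Fin (2 * (m+2)))) ?_ ?_ ?_ ?_
      · intro i hi; simp
      · intro j hj
        simp only [Finset.mem_filter, Finset.mem_univ, true_and]
        omega
      · intro i hi
        simp only [Finset.mem_filter, Finset.mem_univ, true_and] at hi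
        apply Fin.ext; simp; omega
      · intro j hj
        apply Fin.ext; simp; omega
    rw [this]; simp
  rw [hcard]

open Fin.NatCast Fin.CommRing in
/-- If every chord of a chord diagram (a fixed-point-free involution `σ` on `Fin (2n)`,
`n ≥ 1`) joins two adjacent points of the circle, then `σ ∘ ρ` has exactly `n + 1`
cycles, so the Euler genus `ε = 1 + n − f` of the associated one-vertex orientable
ribbon graph is `0`. -/
theorem adjacent_chords_planar (n : ℕ) (hn : 0 < n)
    (σ : Equiv.Perm (Fin (2 * n)))
    (hinv : ∀ i, σ (σ i) = i) (hfpf : ∀ i, σ i ≠ i)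
    (hadj : ∀ i, σ i = (finRotate (2 * n))⁻¹ i ∨ σ i = finRotate (2 * n) i) :
    let τ : Equiv.Perm (Fin (2 * n)) := σ * finRotate (2 * n)
    let f : ℕ := τ.cycleType.card + (2 * n - τ.cycleType.sum)
    f = n + 1 ∧ 1 + n - f = 0 := by
  intro τ f
  rcases n with _ | n
  · omega
  rcases n with _ | m
  · -- n = 1
    have h01 : σ 0 = 1 := by
      have h := hfpf 0
      have hv := (σ 0).isLt
      apply Fin.ext
      have : (σ 0).val ≠ (0 : Fin 2).val := fun hc => h (Fin.ext hc)
      simp at this ⊢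
      omega
    have h10 : σ 1 = 0 := by
      have := hinv 0
      rwa [h01] at this
    have hτ1 : τ = 1 := by
      ext i
      fin_cases i
      · show (σ (finRotate 2 0)).val = _
        rw [show finRotate 2 0 = 1 from rfl, h10]; rfl
      · show (σ (finRotate 2 1)).val = _
        rw [show finRotate 2 1 = 0 from rfl, h01]; rfl
    constructor <;> simp [f, hτ1, Equiv.Perm.cycleType_one]
  · -- n = m + 2
    have hρ : ∀ i : Fin (2 * (m + 2)), finRotate (2 * (m + 2)) i = i + 1 := fun i =>
      finRotate_succ_apply i
    have h2v : ((2 : Fin (2 * (m + 2))).val) = 2 := by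
      have : (2 : Fin (2*(m+2))) = ((2:ℕ) : Fin (2*(m+2))) := by norm_cast
      rw [this, Fin.val_natCast, Nat.mod_eq_of_lt (by omega)]
    have h11 : (1 + 1 : Fin (2 * (m + 2))) = 2 := one_add_one_eq_two
    have h2c : ∀ i : Fin (2 * (m + 2)), i + 1 + 1 = i + 2 := by
      intro i; rw [add_assoc, h11]
    have h20 : (2 : Fin (2 * (m + 2))) ≠ 0 := by
      intro hc
      have : ((2 : Fin (2 * (m + 2))).val) = ((0 : Fin (2 * (m + 2))).val) := by rw [hc]
      rw [h2v] at this
      simp at this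
    have hadj' : ∀ i : Fin (2 * (m + 2)), σ i = i - 1 ∨ σ i = i + 1 := by
      intro i
      rcases hadj i with h | h
      · left
        rw [h]
        apply (finRotate (2 * (m + 2))).injective
        rw [show ∀ x, finRotate (2 * (m + 2)) ((finRotate (2 * (m + 2)))⁻¹ x) = x from fun x => (Equiv.eq_symm_apply _).mp rfl, hρ, sub_add_cancel]
      · right; rw [h, hρ]
    -- alternation
    have halt : ∀ i : Fin (2 * (m + 2)), σ i = i + 1 ↔ ¬ (σ (i + 1) = i + 2) := by
      intro i
      constructor
      · intro h hc
        have h1 : σ (i + 1) = i := by rw [← h, hinv]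
        rw [h1] at hc
        exact h20 (left_eq_add.mp hc)
      · intro hc
        rcases hadj' (i + 1) with h | h
        · have h1 : σ (i + 1) = i := by rw [h]; ring
          have h2 := hinv (i + 1)
          rw [h1] at h2
          exact h2
        · exact absurd (h.trans (h2c i)) hc
    -- parity propagation
    have hpar : ∀ k : ℕ, (σ (k : Fin (2 * (m + 2))) = (k : Fin (2 * (m + 2))) + 1)
        ↔ (k % 2 = 0 ↔ σ 0 = 1) := by
      intro k
      induction k with
      | zero => simp
      | succ k ih =>
        have hc : ((k + 1 : ℕ) : Fin (2 * (m + 2))) = (k : Fin (2 * (m + 2))) + 1 := by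
          push_cast; ring
        rw [hc, h2c, iff_not_comm.mp (halt (k : Fin (2 * (m + 2)))), ih]
        by_cases h0 : σ 0 = 1 <;> simp [h0] <;> omega
    obtain ⟨d, hd, hd2⟩ : ∃ d, d < 2 ∧
        ∀ i : Fin (2 * (m + 2)), (σ (i + 1) = i + 2) ↔ i.val % 2 = d := by
      have key : ∀ i : Fin (2 * (m + 2)),
          (σ (i + 1) = i + 2) ↔ ((i.val + 1) % 2 = 0 ↔ σ 0 = 1) := by
        intro i
        have hcast : (i + 1 : Fin (2 * (m + 2))) = ((i.val + 1 : ℕ) : Fin (2 * (m + 2))) := by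
          push_cast [Fin.cast_val_eq_self]
          ring
        rw [← hpar (i.val + 1), ← hcast, h2c i]
      by_cases hb : σ 0 = 1
      · exact ⟨1, by omega, fun i => by rw [key i]; simp [hb]; omega⟩
      · exact ⟨0, by omega, fun i => by rw [key i]; simp [hb]; omega⟩
    have hτ : ∀ i : Fin (2 * (m + 2)), τ i = σ (i + 1) := by
      intro i
      show σ (finRotate (2 * (m + 2)) i) = _
      rw [hρ]
    have h2 : ∀ i : Fin (2 * (m + 2)), i.val % 2 = d → τ i = i + 2 := by
      intro i hi
      rw [hτ i]
      exact (hd2 i).mpr hi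
    have h0' : ∀ i : Fin (2 * (m + 2)), i.val % 2 ≠ d → τ i = i := by
      intro i hi
      rw [hτ i]
      rcases hadj' (i + 1) with h | h
      · rw [h]; ring
      · exact absurd ((hd2 i).mp (h.trans (h2c i))) hi
    have hct : τ.cycleType = {m + 2} := aux_cycle m d hd τ h2 h0'
    constructor <;> simp [f, hct] <;> omega
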